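/- Let Δ'_1 and Δ'_2 be distinguished subsets with the *-property of a spherical system (S^p, Σ, A), witnessed respectively by Σ_1, Σ_2 ⊂ Σ disjoint with Δ'_i ⊂ Δ(Σ_i). Then the quotient set of spherical roots of the union satisfies Σ/(Δ'_1 ∪ Δ'_2) = (Σ \ (Σ_1 ∪ Σ_2)) ∪ (Σ_1/Δ'_1) ∪ (Σ_2/Δ'_2). -/
import Mathlib


/-!
STATEMENT 19: Let `Δ'_1, Δ'_2` be distinguished subsets with the *-property of a
spherical system `(S^p,Σ,A)`, witnessed by disjoint `Σ_1, Σ_2 ⊆ Σ` with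
`Δ'_i ⊆ Δ(Σ_i)`.  Then
`Σ/(Δ'_1 ∪ Δ'_2) = (Σ \ (Σ_1 ∪ Σ_2)) ∪ (Σ_1/Δ'_1) ∪ (Σ_2/Δ'_2)`.

Coordinates with respect to the basis `Σ` of `Ξ` are used: spherical roots indexed by
a finite type `σ`, colours by `Δ`, simple roots by `S`; `ρ δ : σ → ℚ` records the
values of the colour `δ` on the spherical roots, `moves δ` is the set of simple roots
moving `δ`, and `suppRoot i` is the support of the spherical root `i`.  The localized
quotient data on a subset `R ⊆ σ` (the localization of the system in `Σ' = R`) is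
defined by restricting everything to the coordinates in `R`.
-/

namespace Stmt19

variable {σ Δ S : Type*} [Fintype σ] [DecidableEq σ] [Fintype Δ] [DecidableEq Δ]

def phi (ρ : Δ → σ → ℚ) (D : Finset Δ) (cc : Δ → ℚ) : σ → ℚ :=
  fun i => ∑ δ ∈ D, cc δ * ρ δ i

/-- `Σ'(Δ')` computed in the localization of the system in the subset `R` of `Σ` -/
def SigmaSetOn (R : Finset σ) (ρ : Δ → σ → ℚ) (D : Finset Δ) : Set σ :=
  {i | i ∈ R ∧ ∃ cc : Δ → ℚ, (∀ δ ∈ D, 0 < cc δ) ∧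
    (∀ j ∈ R, 0 ≤ phi ρ D cc j) ∧ 0 < phi ρ D cc i}

/-- `Ξ'/Δ'` computed in the localization in `R` -/
def XiQuotSetOn (R : Finset σ) (ρ : Δ → σ → ℚ) (D : Finset Δ) : Set (σ → ℚ) :=
  {ξ | (∀ i, i ∉ R → ξ i = 0) ∧ (∀ δ ∈ D, ∑ i, ρ δ i * ξ i = 0) ∧
    ∀ i ∈ SigmaSetOn R ρ D, ξ i = 0}

def SemOn (R : Finset σ) (ρ : Δ → σ → ℚ) (D : Finset Δ) : Set (σ → ℚ) :=
  {ξ | (∀ i, ∃ m : ℕ, ξ i = m) ∧ ξ ∈ XiQuotSetOn R ρ D}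

/-- `Σ'/Δ'` computed in the localization in `R` -/
def SigmaQuotOn (R : Finset σ) (ρ : Δ → σ → ℚ) (D : Finset Δ) : Set (σ → ℚ) :=
  {ξ | ξ ∈ SemOn R ρ D ∧ ξ ≠ 0 ∧
    ∀ a ∈ SemOn R ρ D, ∀ b ∈ SemOn R ρ D, ξ = a + b → a = 0 ∨ b = 0}

/-- the *-property, for the localization in `R` -/
def StarOn (R : Finset σ) (ρ : Δ → σ → ℚ) (D : Finset Δ) : Prop :=
  LinearIndependent ℚ (fun x : SigmaQuotOn R ρ D => (x : σ → ℚ)) ∧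
    Submodule.span ℚ (SigmaQuotOn R ρ D) = Submodule.span ℚ (XiQuotSetOn R ρ D)

def DistinguishedOn (R : Finset σ) (ρ : Δ → σ → ℚ) (D : Finset Δ) : Prop :=
  ∃ cc : Δ → ℚ, (∀ δ ∈ D, 0 < cc δ) ∧ ∀ i ∈ R, 0 ≤ phi ρ D cc i

/-- `Δ(Σ')`: the colours moved by simple roots in `supp(Σ')` and vanishing on
`Σ \ Σ'`; here `Σ'` is given by the subset `R` of indices. -/
def DeltaOf (moves : Δ → Finset S) (suppRoot : σ → Finset S)
    (ρ : Δ → σ → ℚ) (R : Finset σ) : Set Δ :=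
  {δ | (∃ α ∈ moves δ, ∃ i ∈ R, α ∈ suppRoot i) ∧ ∀ i, i ∉ R → ρ δ i = 0}

def dualBasisVec (i : σ) : σ → ℚ := Pi.single i 1

set_option linter.unusedSectionVars false

-- ### auxiliary lemmas

lemma nat_nonneg {x : ℚ} (h : ∃ m : ℕ, x = m) : 0 ≤ x := by
  obtain ⟨m, rfl⟩ := h; exact Nat.cast_nonneg m

lemma add_eq_zero_split {x y : ℚ} (hx : 0 ≤ x) (hy : 0 ≤ y) (h : x + y = 0) :
    x = 0 ∧ y = 0 := ⟨by linarith, by linarith⟩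

section Generic

variable {ρ : Δ → σ → ℚ} {A B : Finset σ} {DA DB : Finset Δ}

lemma mem_or_mem_of_sigmaSet
    (hvA : ∀ δ ∈ DA, ∀ i, i ∉ A → ρ δ i = 0)
    (hvB : ∀ δ ∈ DB, ∀ i, i ∉ B → ρ δ i = 0)
    {i : σ} (hi : i ∈ SigmaSetOn Finset.univ ρ (DA ∪ DB)) : i ∈ A ∨ i ∈ B := by
  by_contra h
  push_neg at h
  obtain ⟨-, cc, -, -, hlt⟩ := hi
  have h0 : phi ρ (DA ∪ DB) cc i = 0 := by
    apply Finset.sum_eq_zero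
    intro δ hδ
    rcases Finset.mem_union.1 hδ with h1 | h2
    · rw [hvA δ h1 i h.1, mul_zero]
    · rw [hvB δ h2 i h.2, mul_zero]
  rw [h0] at hlt
  exact lt_irrefl _ hlt

lemma sigmaSet_forward
    (hAB : Disjoint A B)
    (hvB : ∀ δ ∈ DB, ∀ i, i ∉ B → ρ δ i = 0)
    {i : σ} (hiA : i ∈ A)
    (hi : i ∈ SigmaSetOn Finset.univ ρ (DA ∪ DB)) : i ∈ SigmaSetOn A ρ DA := by
  obtain ⟨-, cc, hpos, hge, hlt⟩ := hi
  have key : ∀ j ∈ A, phi ρ DA cc j = phi ρ (DA ∪ DB) cc j := by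
    intro j hj
    refine Finset.sum_subset Finset.subset_union_left ?_
    intro δ hδ hδA
    rw [hvB δ ((Finset.mem_union.1 hδ).resolve_left hδA) j
      (Finset.disjoint_left.1 hAB hj), mul_zero]
  exact ⟨hiA, cc, fun δ hδ => hpos δ (Finset.mem_union_left _ hδ),
    fun j hj => (key j hj) ▸ hge j (Finset.mem_univ j), (key i hiA) ▸ hlt⟩

lemma sigmaSet_backward
    (hAB : Disjoint A B)
    (hvA : ∀ δ ∈ DA, ∀ i, i ∉ A → ρ δ i = 0)
    (hdB : DistinguishedOn Finset.univ ρ DB) :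
    SigmaSetOn A ρ DA ⊆ SigmaSetOn Finset.univ ρ (DA ∪ DB) := by
  rintro i ⟨hiA, cc1, hpos1, hge1, hlt1⟩
  obtain ⟨cc2, hpos2, hge2⟩ := hdB
  set cc : Δ → ℚ := fun δ => (if δ ∈ DA then cc1 δ else 0) + (if δ ∈ DB then cc2 δ else 0)
    with hcc
  have key : ∀ j, phi ρ (DA ∪ DB) cc j = phi ρ DA cc1 j + phi ρ DB cc2 j := by
    intro j
    show (∑ δ ∈ DA ∪ DB, cc δ * ρ δ j) = _
    have : ∀ δ ∈ DA ∪ DB, cc δ * ρ δ j =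
        (if δ ∈ DA then cc1 δ * ρ δ j else 0) + (if δ ∈ DB then cc2 δ * ρ δ j else 0) := by
      intro δ _
      simp only [hcc, add_mul, ite_mul, zero_mul]
    rw [Finset.sum_congr rfl this, Finset.sum_add_distrib]
    congr 1
    · rw [Finset.sum_ite_mem, Finset.union_inter_cancel_left]; rfl
    · rw [Finset.sum_ite_mem, Finset.union_inter_cancel_right]; rfl
  have hA0 : ∀ j, j ∉ A → phi ρ DA cc1 j = 0 := by
    intro j hj
    apply Finset.sum_eq_zero
    intro δ hδ
    rw [hvA δ hδ j hj, mul_zero]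
  have hAnn : ∀ j, 0 ≤ phi ρ DA cc1 j := by
    intro j
    by_cases hj : j ∈ A
    · exact hge1 j hj
    · rw [hA0 j hj]
  refine ⟨Finset.mem_univ i, cc, ?_, ?_, ?_⟩
  · intro δ hδ
    rcases Finset.mem_union.1 hδ with h1 | h2
    · refine add_pos_of_pos_of_nonneg (by rw [if_pos h1]; exact hpos1 δ h1) ?_
      by_cases h2 : δ ∈ DB
      · rw [if_pos h2]; exact (hpos2 δ h2).le
      · rw [if_neg h2]
    · refine add_pos_of_nonneg_of_pos ?_ (by rw [if_pos h2]; exact hpos2 δ h2)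
      by_cases h1 : δ ∈ DA
      · rw [if_pos h1]; exact (hpos1 δ h1).le
      · rw [if_neg h1]
  · intro j _
    rw [key j]
    exact add_nonneg (hAnn j) (hge2 j (Finset.mem_univ j))
  · rw [key i]
    exact add_pos_of_pos_of_nonneg hlt1 (hge2 i (Finset.mem_univ i))

lemma semOn_subset
    (hAB : Disjoint A B)
    (hvA : ∀ δ ∈ DA, ∀ i, i ∉ A → ρ δ i = 0)
    (hvB : ∀ δ ∈ DB, ∀ i, i ∉ B → ρ δ i = 0) :
    SemOn A ρ DA ⊆ SemOn Finset.univ ρ (DA ∪ DB) := by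
  rintro η ⟨hnat, hsupp, hlin, hvan⟩
  refine ⟨hnat, fun i hi => absurd (Finset.mem_univ i) hi, ?_, ?_⟩
  · intro δ hδ
    rcases Finset.mem_union.1 hδ with h1 | h2
    · exact hlin δ h1
    · apply Finset.sum_eq_zero
      intro i _
      by_cases hiA : i ∈ A
      · rw [hvB δ h2 i (Finset.disjoint_left.1 hAB hiA), zero_mul]
      · rw [hsupp i hiA, mul_zero]
  · intro i hi
    rcases mem_or_mem_of_sigmaSet hvA hvB hi with h | h
    · exact hvan i (sigmaSet_forward hAB hvB h hi)
    · exact hsupp i (Finset.disjoint_right.1 hAB h)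

lemma mem_semOn_univ_of_outside
    (hvA : ∀ δ ∈ DA, ∀ i, i ∉ A → ρ δ i = 0)
    (hvB : ∀ δ ∈ DB, ∀ i, i ∉ B → ρ δ i = 0)
    {η : σ → ℚ} (hnat : ∀ i, ∃ m : ℕ, η i = m)
    (hsupp : ∀ i, (i ∈ A ∨ i ∈ B) → η i = 0) :
    η ∈ SemOn Finset.univ ρ (DA ∪ DB) := by
  refine ⟨hnat, fun i hi => absurd (Finset.mem_univ i) hi, ?_, ?_⟩
  · intro δ hδ
    apply Finset.sum_eq_zero
    intro i _
    by_cases h : i ∈ A ∨ i ∈ B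
    · rw [hsupp i h, mul_zero]
    · push_neg at h
      rcases Finset.mem_union.1 hδ with h1 | h2
      · rw [hvA δ h1 i h.1, zero_mul]
      · rw [hvB δ h2 i h.2, zero_mul]
  · intro i hi
    exact hsupp i (mem_or_mem_of_sigmaSet hvA hvB hi)

lemma semOn_add {R : Finset σ} {D : Finset Δ} {a b : σ → ℚ}
    (ha : a ∈ SemOn R ρ D) (hb : b ∈ SemOn R ρ D) : a + b ∈ SemOn R ρ D := by
  obtain ⟨ha1, ha2, ha3, ha4⟩ := ha
  obtain ⟨hb1, hb2, hb3, hb4⟩ := hb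
  refine ⟨?_, ?_, ?_, ?_⟩
  · intro i
    obtain ⟨m, hm⟩ := ha1 i
    obtain ⟨n, hn⟩ := hb1 i
    exact ⟨m + n, by simp [Pi.add_apply, hm, hn]⟩
  · intro i hi
    simp [Pi.add_apply, ha2 i hi, hb2 i hi]
  · intro δ hδ
    have : ∀ i ∈ (Finset.univ : Finset σ), ρ δ i * (a + b) i = ρ δ i * a i + ρ δ i * b i := by
      intro i _; simp [Pi.add_apply, mul_add]
    rw [Finset.sum_congr rfl this, Finset.sum_add_distrib, ha3 δ hδ, hb3 δ hδ, add_zero]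
  · intro i hi
    simp [Pi.add_apply, ha4 i hi, hb4 i hi]

lemma quot_incl
    (hAB : Disjoint A B)
    (hvA : ∀ δ ∈ DA, ∀ i, i ∉ A → ρ δ i = 0)
    (hvB : ∀ δ ∈ DB, ∀ i, i ∉ B → ρ δ i = 0) :
    SigmaQuotOn A ρ DA ⊆ SigmaQuotOn Finset.univ ρ (DA ∪ DB) := by
  rintro ξ ⟨hmem, hne, hind⟩
  obtain ⟨hnat, hsupp, hlin, hvan⟩ := hmem
  refine ⟨semOn_subset hAB hvA hvB ⟨hnat, hsupp, hlin, hvan⟩, hne, ?_⟩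
  intro a ha b hb hab
  have key : ∀ c d : σ → ℚ, c ∈ SemOn Finset.univ ρ (DA ∪ DB) →
      d ∈ SemOn Finset.univ ρ (DA ∪ DB) → ξ = c + d → c ∈ SemOn A ρ DA := by
    intro c d hc hd hcd
    obtain ⟨hcnat, -, hclin, -⟩ := hc
    obtain ⟨hdnat, -, -, -⟩ := hd
    have hsplit : ∀ i, ξ i = 0 → c i = 0 := by
      intro i hi
      have : c i + d i = 0 := by rw [← hi, hcd]; rfl
      exact (add_eq_zero_split (nat_nonneg (hcnat i)) (nat_nonneg (hdnat i)) this).1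
    refine ⟨hcnat, fun i hi => hsplit i (hsupp i hi),
      fun δ hδ => hclin δ (Finset.mem_union_left _ hδ),
      fun i hi => hsplit i (hvan i hi)⟩
  rcases hind a (key a b ha hb hab) b
    (key b a hb ha (by rw [hab, add_comm])) hab with h | h
  · exact Or.inl h
  · exact Or.inr h

lemma quot_back
    (hAB : Disjoint A B)
    (hvA : ∀ δ ∈ DA, ∀ i, i ∉ A → ρ δ i = 0)
    (hvB : ∀ δ ∈ DB, ∀ i, i ∉ B → ρ δ i = 0)
    (hdB : DistinguishedOn Finset.univ ρ DB)
    {ξ : σ → ℚ} (hξ : ξ ∈ SigmaQuotOn Finset.univ ρ (DA ∪ DB))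
    (hsupp : ∀ i, i ∉ A → ξ i = 0) : ξ ∈ SigmaQuotOn A ρ DA := by
  obtain ⟨⟨hnat, -, hlin, hvan⟩, hne, hind⟩ := hξ
  refine ⟨⟨hnat, hsupp, fun δ hδ => hlin δ (Finset.mem_union_left _ hδ),
    fun i hi => hvan i (sigmaSet_backward hAB hvA hdB hi)⟩, hne, ?_⟩
  intro a ha b hb hab
  exact hind a (semOn_subset hAB hvA hvB ha) b (semOn_subset hAB hvA hvB hb) hab

end Generic


theorem sigmaQuot_of_union
    (moves : Δ → Finset S) (suppRoot : σ → Finset S) (ρ : Δ → σ → ℚ)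
    (Sig1 Sig2 : Finset σ) (D1 D2 : Finset Δ)
    (hdisj : Disjoint Sig1 Sig2)
    (hD1 : ↑D1 ⊆ DeltaOf moves suppRoot ρ Sig1)
    (hD2 : ↑D2 ⊆ DeltaOf moves suppRoot ρ Sig2)
    (hd1 : DistinguishedOn Finset.univ ρ D1)
    (hd2 : DistinguishedOn Finset.univ ρ D2)
    (hs1 : StarOn Sig1 ρ D1) (hs2 : StarOn Sig2 ρ D2) :
    SigmaQuotOn Finset.univ ρ (D1 ∪ D2) =
      (dualBasisVec '' {i : σ | i ∉ Sig1 ∧ i ∉ Sig2}) ∪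
        SigmaQuotOn Sig1 ρ D1 ∪ SigmaQuotOn Sig2 ρ D2 := by
  have hv1 : ∀ δ ∈ D1, ∀ i, i ∉ Sig1 → ρ δ i = 0 := fun δ hδ => (hD1 hδ).2
  have hv2 : ∀ δ ∈ D2, ∀ i, i ∉ Sig2 → ρ δ i = 0 := fun δ hδ => (hD2 hδ).2
  have hcomm : D1 ∪ D2 = D2 ∪ D1 := Finset.union_comm _ _
  -- membership of Pi.single vectors outside Sig1 ∪ Sig2
  have hsingle : ∀ i : σ, i ∉ Sig1 → i ∉ Sig2 →
      dualBasisVec i ∈ SemOn Finset.univ ρ (D1 ∪ D2) := by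
    intro i h1 h2
    apply mem_semOn_univ_of_outside hv1 hv2
    · intro j
      by_cases hj : j = i
      · exact ⟨1, by subst hj; simp [dualBasisVec]⟩
      · exact ⟨0, by simp [dualBasisVec, Pi.single_apply, hj]⟩
    · intro j hj
      have : j ≠ i := by rintro rfl; rcases hj with h | h; exacts [h1 h, h2 h]
      simp [dualBasisVec, Pi.single_apply, this]
  apply Set.Subset.antisymm
  · -- ⊆
    rintro ξ ⟨⟨hnat, hsupp0, hlin, hvan⟩, hne, hind⟩
    classical
    set a : σ → ℚ := fun i => if i ∈ Sig1 ∨ i ∈ Sig2 then 0 else ξ i with ha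
    set b : σ → ℚ := fun i => if i ∈ Sig1 then ξ i else 0 with hb
    set c : σ → ℚ := fun i => if i ∈ Sig2 then ξ i else 0 with hc
    have hamem : a ∈ SemOn Finset.univ ρ (D1 ∪ D2) := by
      apply mem_semOn_univ_of_outside hv1 hv2
      · intro i
        by_cases hi : i ∈ Sig1 ∨ i ∈ Sig2
        · exact ⟨0, by simp [ha, hi]⟩
        · obtain ⟨m, hm⟩ := hnat i; exact ⟨m, by simp [ha, hi, hm]⟩
      · intro i hi; simp [ha, hi]
    have hbmem : ∀ (A' B' : Finset σ) (DA DB : Finset Δ),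
        Disjoint A' B' →
        (∀ δ ∈ DA, ∀ i, i ∉ A' → ρ δ i = 0) →
        (∀ δ ∈ DB, ∀ i, i ∉ B' → ρ δ i = 0) →
        (∀ δ ∈ DA, ∑ i, ρ δ i * ξ i = 0) →
        (∀ i ∈ SigmaSetOn Finset.univ ρ (DA ∪ DB), ξ i = 0) →
        (fun i => if i ∈ A' then ξ i else 0) ∈ SemOn Finset.univ ρ (DA ∪ DB) := by
      intro A' B' DA DB hAB hvA hvB hlin' hvan'
      refine ⟨?_, fun i hi => absurd (Finset.mem_univ i) hi, ?_, ?_⟩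
      · intro i
        by_cases hi : i ∈ A'
        · obtain ⟨m, hm⟩ := hnat i; exact ⟨m, by simp [hi, hm]⟩
        · exact ⟨0, by simp [hi]⟩
      · intro δ hδ
        rcases Finset.mem_union.1 hδ with h1 | h2
        · rw [← hlin' δ h1]
          apply Finset.sum_congr rfl
          intro i _
          by_cases hi : i ∈ A'
          · simp [hi]
          · simp [hi, hvA δ h1 i hi]
        · apply Finset.sum_eq_zero
          intro i _
          by_cases hi : i ∈ A'
          · rw [hvB δ h2 i (Finset.disjoint_left.1 hAB hi), zero_mul]
          · simp [hi]
      · intro i hi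
        by_cases h : i ∈ A'
        · simp [h, hvan' i hi]
        · simp [h]
    have hbm : b ∈ SemOn Finset.univ ρ (D1 ∪ D2) :=
      hbmem Sig1 Sig2 D1 D2 hdisj hv1 hv2
        (fun δ hδ => hlin δ (Finset.mem_union_left _ hδ)) hvan
    have hcm : c ∈ SemOn Finset.univ ρ (D1 ∪ D2) := by
      have := hbmem Sig2 Sig1 D2 D1 hdisj.symm hv2 hv1
        (fun δ hδ => hlin δ (Finset.mem_union_right _ hδ)) (by rw [← hcomm]; exact hvan)
      rwa [← hcomm] at this
    have hsum : ξ = a + (b + c) := by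
      funext i
      by_cases h1 : i ∈ Sig1
      · have h2 : i ∉ Sig2 := Finset.disjoint_left.1 hdisj h1
        simp [Pi.add_apply, ha, hb, hc, h1, h2]
      · by_cases h2 : i ∈ Sig2
        · simp [Pi.add_apply, ha, hb, hc, h1, h2]
        · simp [Pi.add_apply, ha, hb, hc, h1, h2]
    rcases hind a hamem (b + c) (semOn_add hbm hcm) hsum with h | h
    · -- a = 0 : ξ = b + c
      have hsum2 : ξ = b + c := by rw [hsum, h, zero_add]
      rcases hind b hbm c hcm hsum2 with hb0 | hc0
      · -- ξ = c, supported on Sig2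
        right
        have hxc : ξ = c := by rw [hsum2, hb0, zero_add]
        refine quot_back hdisj.symm hv2 hv1 hd1 ?_ ?_
        · rw [← hcomm]; exact ⟨⟨hnat, hsupp0, hlin, hvan⟩, hne, hind⟩
        · intro i hi; rw [hxc]; simp [hc, hi]
      · -- ξ = b, supported on Sig1
        left; right
        have hxb : ξ = b := by rw [hsum2, hc0, add_zero]
        refine quot_back hdisj hv1 hv2 hd2 ⟨⟨hnat, hsupp0, hlin, hvan⟩, hne, hind⟩ ?_
        intro i hi; rw [hxb]; simp [hb, hi]
    · -- b + c = 0 : ξ = a, supported outside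
      have hbc : ∀ i, b i + c i = 0 := fun i => congrFun h i
      have hout : ∀ i, (i ∈ Sig1 ∨ i ∈ Sig2) → ξ i = 0 := by
        intro i hi
        have hnb : 0 ≤ b i := by
          rcases hbm with ⟨hn, -⟩; exact nat_nonneg (hn i)
        have hnc : 0 ≤ c i := by
          rcases hcm with ⟨hn, -⟩; exact nat_nonneg (hn i)
        obtain ⟨e1, e2⟩ := add_eq_zero_split hnb hnc (hbc i)
        rcases hi with h1 | h1
        · have := e1; simpa [hb, h1] using this
        · have := e2; simpa [hc, h1] using this
      -- find the coordinate
      have hex : ∃ i, ξ i ≠ 0 := by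
        by_contra hh
        push_neg at hh
        exact hne (funext hh)
      obtain ⟨i, hi⟩ := hex
      have hi1 : i ∉ Sig1 := fun h' => hi (hout i (Or.inl h'))
      have hi2 : i ∉ Sig2 := fun h' => hi (hout i (Or.inr h'))
      obtain ⟨m, hm⟩ := hnat i
      have hm0 : m ≠ 0 := by rintro rfl; simp [hm] at hi
      -- ξ = e_i + (ξ - e_i)
      have hηmem : ξ - dualBasisVec i ∈ SemOn Finset.univ ρ (D1 ∪ D2) := by
        apply mem_semOn_univ_of_outside hv1 hv2
        · intro j
          by_cases hj : j = i
          · refine ⟨m - 1, ?_⟩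
            subst hj
            rw [Pi.sub_apply, hm]
            simp [dualBasisVec, Nat.cast_sub (Nat.one_le_iff_ne_zero.2 hm0)]
          · obtain ⟨n, hn⟩ := hnat j
            exact ⟨n, by simp [Pi.sub_apply, dualBasisVec, Pi.single_apply, hj, hn]⟩
        · intro j hj
          have hji : j ≠ i := by rintro rfl; rcases hj with h' | h'; exacts [hi1 h', hi2 h']
          simp [Pi.sub_apply, hout j hj, dualBasisVec, Pi.single_apply, hji]
      have hdec : ξ = dualBasisVec i + (ξ - dualBasisVec i) := by ring
      rcases hind (dualBasisVec i) (hsingle i hi1 hi2) (ξ - dualBasisVec i) hηmem hdec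
        with h' | h'
      · exfalso
        have := congrFun h' i
        simp [dualBasisVec] at this
      · left; left
        refine ⟨i, ⟨hi1, hi2⟩, ?_⟩
        have : ξ - dualBasisVec i = 0 := h'
        have := sub_eq_zero.1 this
        exact this.symm
  · -- ⊇
    rintro ξ ((⟨i, ⟨hi1, hi2⟩, rfl⟩ | hξ) | hξ)
    · -- dual basis vector case
      refine ⟨hsingle i hi1 hi2, ?_, ?_⟩
      · intro h
        have := congrFun h i
        simp [dualBasisVec] at this
      · intro p hp q hq hpq
        obtain ⟨hpn, -, -, -⟩ := hp
        obtain ⟨hqn, -, -, -⟩ := hq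
        obtain ⟨m, hm⟩ := hpn i
        obtain ⟨n, hn⟩ := hqn i
        have h1 : (m : ℚ) + n = 1 := by
          have := congrFun hpq i
          simp only [dualBasisVec, Pi.single_eq_same, Pi.add_apply] at this
          rw [← hm, ← hn, ← this]
        have hmn : m + n = 1 := by exact_mod_cast h1
        have hzero : ∀ j, j ≠ i → p j = 0 ∧ q j = 0 := by
          intro j hj
          have hsum0 : p j + q j = 0 := by
            have := congrFun hpq j
            simp only [Pi.add_apply] at this
            rw [← this]
            simp [dualBasisVec, Pi.single_apply, hj]
          exact add_eq_zero_split (nat_nonneg (hpn j)) (nat_nonneg (hqn j)) hsum0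
        rcases Nat.le_one_iff_eq_zero_or_eq_one.1 (by omega : m ≤ 1) with hm1 | hm1
        · left
          funext j
          by_cases hj : j = i
          · subst hj; rw [hm, hm1]; simp
          · exact (hzero j hj).1
        · right
          funext j
          by_cases hj : j = i
          · subst hj
            have : n = 0 := by omega
            rw [hn, this]; simp
          · exact (hzero j hj).2
    · exact quot_incl hdisj hv1 hv2 hξ
    · rw [hcomm]
      exact quot_incl hdisj.symm hv2 hv1 hξ

end Stmt19
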